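/- Let 𝒳 be a nonempty finite set and P a probability mass function on 𝒳 with P(x) > 0 for all x. Define the Shannon code lengths ℓ_S(x) = ⌈log₂(1/P(x))⌉ and let L_S = ℓ_S(X) for X ∼ P. Then log₂|𝒳| ≥ (1 − 1/(2 ln 2)) · E[L_S²]/E[L_S] − 1; equivalently, E[L_S²]/E[L_S] ≤ (log₂|𝒳| + 1) / (1 − 1/(2 ln 2)). Consequently the average age E[L_S] + E[L_S²]/(2E[L_S]) − 1/2 of the Shannon code for P is O(log |𝒳|). -/

import Mathlib

open Real Finset

lemma jensen_log' {ι : Type*} (t : Finset ι) (w p : ι → ℝ)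
    (hw : ∀ i ∈ t, 0 ≤ w i) (hw1 : ∑ i ∈ t, w i = 1)
    (hp : ∀ i ∈ t, 0 < p i) :
    ∑ i ∈ t, w i * Real.log (p i) ≤ Real.log (∑ i ∈ t, w i * p i) := by
  have := strictConcaveOn_log_Ioi.concaveOn.le_map_sum hw hw1
    (fun i hi => Set.mem_Ioi.2 (hp i hi))
  simpa [smul_eq_mul] using this

lemma log_le_half' (r : ℝ) (hr : 0 < r) : Real.log r ≤ r / 2 := by
  have hs : 0 < Real.sqrt r := Real.sqrt_pos.2 hr
  have h1 : Real.log (Real.sqrt r) ≤ Real.sqrt r - 1 := Real.log_le_sub_one_of_pos hs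
  have h4 : Real.sqrt r ^ 2 = r := Real.sq_sqrt hr.le
  have h2 : Real.log r = 2 * Real.log (Real.sqrt r) := by
    conv_lhs => rw [← h4]
    rw [Real.log_pow]; push_cast; ring
  nlinarith [sq_nonneg (Real.sqrt r - 2)]

/-- The average age of a Shannon code for `P` is `O(log |𝒳|)`: with Shannon lengths
`ℓ_S(x) = ⌈log₂(1/P(x))⌉` and `L_S = ℓ_S(X)`, `X ∼ P`, one has
`log₂|𝒳| ≥ (1 − 1/(2 ln 2))·E[L_S²]/E[L_S] − 1`; equivalently,
`E[L_S²]/E[L_S] ≤ (log₂|𝒳| + 1)/(1 − 1/(2 ln 2))`. -/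
theorem stmt_6 {𝒳 : Type*} [Fintype 𝒳] [Nonempty 𝒳]
    (P : 𝒳 → ℝ) (hP : ∀ x, 0 < P x) (hPsum : ∑ x, P x = 1)
    (ℓS : 𝒳 → ℕ) (hℓS : ∀ x, ℓS x = Nat.ceil (Real.logb 2 (1 / P x))) :
    (Real.logb 2 (Fintype.card 𝒳) ≥
      (1 - 1 / (2 * Real.log 2)) * ((∑ x, P x * (ℓS x : ℝ) ^ 2) / (∑ x, P x * (ℓS x : ℝ)))
        - 1) ∧
    ((∑ x, P x * (ℓS x : ℝ) ^ 2) / (∑ x, P x * (ℓS x : ℝ)) ≤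
      (Real.logb 2 (Fintype.card 𝒳) + 1) / (1 - 1 / (2 * Real.log 2))) := by
  classical
  have hlog2 : (0:ℝ) < Real.log 2 := Real.log_pos one_lt_two
  have hln2half : (1:ℝ)/2 < Real.log 2 := by
    have := Real.log_two_gt_d9; linarith
  have hcpos : (0:ℝ) < 1 - 1 / (2 * Real.log 2) := by
    rw [sub_pos, div_lt_one (by linarith)]; linarith
  set A := ∑ x, P x * (ℓS x : ℝ) with hA
  set B := ∑ x, P x * (ℓS x : ℝ) ^ 2 with hB
  have main : Real.logb 2 (Fintype.card 𝒳) ≥ (1 - 1 / (2 * Real.log 2)) * (B / A) - 1 := by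
    rcases lt_or_ge 1 (Fintype.card 𝒳) with hcard | hcard
    · -- main case: card ≥ 2
      have hPlt : ∀ x, P x < 1 := by
        intro x
        obtain ⟨y, hyx⟩ := Fintype.exists_ne_of_one_lt_card hcard x
        have hpair : ∑ z ∈ ({x, y} : Finset 𝒳), P z = P x + P y :=
          Finset.sum_pair (Ne.symm hyx)
        have hle : ∑ z ∈ ({x, y} : Finset 𝒳), P z ≤ ∑ z, P z :=
          Finset.sum_le_sum_of_subset_of_nonneg (subset_univ _) (fun z _ _ => (hP z).le)
        rw [hpair, hPsum] at hle
        linarith [hP y]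
      have hℓ1 : ∀ x, (1:ℝ) ≤ (ℓS x : ℝ) := by
        intro x
        have hgt : (1:ℝ) < 1 / P x := by
          rw [lt_div_iff₀ (hP x)]; linarith [hPlt x]
        have : 0 < Real.logb 2 (1 / P x) := Real.logb_pos one_lt_two hgt
        have : 0 < ℓS x := by rw [hℓS x]; exact Nat.ceil_pos.2 this
        exact_mod_cast this
      have hℓpos : ∀ x, (0:ℝ) < (ℓS x : ℝ) := fun x => lt_of_lt_of_le one_pos (hℓ1 x)
      have hub : ∀ x, (ℓS x : ℝ) * Real.log 2 ≤ Real.log (1 / P x) + Real.log 2 := by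
        intro x
        have h0 : 0 ≤ Real.logb 2 (1 / P x) := by
          apply Real.logb_nonneg one_lt_two
          rw [le_div_iff₀ (hP x)]; linarith [hPlt x]
        have hceil : (ℓS x : ℝ) < Real.logb 2 (1 / P x) + 1 := by
          rw [hℓS x]; exact Nat.ceil_lt_add_one h0
        have h2 : (ℓS x : ℝ) * Real.log 2 ≤ (Real.logb 2 (1 / P x) + 1) * Real.log 2 :=
          (mul_lt_mul_of_pos_right hceil hlog2).le
        rw [Real.logb] at h2
        calc (ℓS x : ℝ) * Real.log 2 ≤ (Real.log (1 / P x) / Real.log 2 + 1) * Real.log 2 := h2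
          _ = Real.log (1 / P x) + Real.log 2 := by field_simp
      have hA1 : (1:ℝ) ≤ A := by
        rw [hA, ← hPsum]
        apply Finset.sum_le_sum
        intro x _
        have := mul_le_mul_of_nonneg_left (hℓ1 x) (hP x).le
        linarith
      have hApos : (0:ℝ) < A := by linarith
      have hBA : A ≤ B := by
        apply Finset.sum_le_sum
        intro x _
        have hsq : (ℓS x : ℝ) ≤ (ℓS x : ℝ) ^ 2 := by nlinarith [hℓ1 x]
        exact mul_le_mul_of_nonneg_left hsq (hP x).le
      have hBpos : (0:ℝ) < B := by linarith
      set w : 𝒳 → ℝ := fun x => P x * (ℓS x : ℝ) / A with hw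
      have hw0 : ∀ x, 0 < w x := fun x => div_pos (mul_pos (hP x) (hℓpos x)) hApos
      have hwsum : ∑ x, w x = 1 := by
        rw [hw, ← Finset.sum_div, ← hA, div_self hApos.ne']
      have J1 : ∑ x, w x * Real.log (1 / w x) ≤ Real.log (Fintype.card 𝒳) := by
        have h := jensen_log' univ w (fun x => 1 / w x)
          (fun i _ => (hw0 i).le) hwsum (fun i _ => one_div_pos.mpr (hw0 i))
        have hsum : ∑ x, w x * (1 / w x) = (Fintype.card 𝒳 : ℝ) := by
          rw [Finset.sum_congr rfl (fun x _ => mul_one_div_cancel (hw0 x).ne')]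
          simp [Finset.card_univ]
        rwa [hsum] at h
      have J2 : ∑ x, w x * Real.log ((ℓS x : ℝ) / A) ≤ Real.log (B / A ^ 2) := by
        have h := jensen_log' univ w (fun x => (ℓS x : ℝ) / A)
          (fun i _ => (hw0 i).le) hwsum
          (fun i _ => div_pos (hℓpos i) hApos)
        have hsum : ∑ x, w x * ((ℓS x : ℝ) / A) = B / A ^ 2 := by
          rw [eq_div_iff (pow_ne_zero 2 hApos.ne'), hB, Finset.sum_mul]
          apply Finset.sum_congr rfl
          intro x _
          show P x * (ℓS x : ℝ) / A * ((ℓS x : ℝ) / A) * A ^ 2 = P x * (ℓS x : ℝ) ^ 2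
          field_simp
        rwa [hsum] at h
      have hid : ∀ x, Real.log (1 / P x) =
          Real.log ((ℓS x : ℝ) / A) + Real.log (1 / w x) := by
        intro x
        have hPne := (hP x).ne'
        have hℓne : (ℓS x : ℝ) ≠ 0 := (hℓpos x).ne'
        have hAne := hApos.ne'
        have hwdef : w x = P x * (ℓS x : ℝ) / A := rfl
        rw [one_div, one_div, Real.log_inv, Real.log_inv, Real.log_div hℓne hAne, hwdef,
          Real.log_div (mul_ne_zero hPne hℓne) hAne, Real.log_mul hPne hℓne]
        ring
      have hS : ∑ x, w x * Real.log (1 / P x) ≤ Real.log (B / A ^ 2) +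
          Real.log (Fintype.card 𝒳) := by
        calc ∑ x, w x * Real.log (1 / P x)
            = ∑ x, (w x * Real.log ((ℓS x : ℝ) / A) + w x * Real.log (1 / w x)) := by
              apply Finset.sum_congr rfl
              intro x _
              rw [hid x]; ring
          _ = (∑ x, w x * Real.log ((ℓS x : ℝ) / A)) + ∑ x, w x * Real.log (1 / w x) :=
              Finset.sum_add_distrib
          _ ≤ _ := add_le_add J2 J1
      have hchain : B * Real.log 2 ≤
          A * (Real.log (B / A ^ 2) + Real.log (Fintype.card 𝒳)) + A * Real.log 2 := by
        have step1 : B * Real.log 2 ≤ (∑ x, P x * (ℓS x : ℝ) * Real.log (1 / P x))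
            + A * Real.log 2 := by
          rw [hB, hA, Finset.sum_mul, Finset.sum_mul, ← Finset.sum_add_distrib]
          apply Finset.sum_le_sum
          intro x _
          have hnn : (0:ℝ) ≤ P x * (ℓS x : ℝ) := (mul_pos (hP x) (hℓpos x)).le
          have h := mul_le_mul_of_nonneg_left (hub x) hnn
          nlinarith [h]
        have step2 : (∑ x, P x * (ℓS x : ℝ) * Real.log (1 / P x)) =
            A * ∑ x, w x * Real.log (1 / P x) := by
          rw [Finset.mul_sum]
          apply Finset.sum_congr rfl
          intro x _
          show P x * (ℓS x : ℝ) * Real.log (1 / P x) =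
            A * (P x * (ℓS x : ℝ) / A * Real.log (1 / P x))
          field_simp
        have step3 : A * ∑ x, w x * Real.log (1 / P x) ≤
            A * (Real.log (B / A ^ 2) + Real.log (Fintype.card 𝒳)) :=
          mul_le_mul_of_nonneg_left hS hApos.le
        rw [step2] at step1
        linarith
      have hlogbd : Real.log (B / A ^ 2) ≤ (B / A) / 2 := by
        have h1 : B / A ^ 2 ≤ B / A := by
          apply div_le_div_of_nonneg_left hBpos.le hApos
          nlinarith
        have h2 : Real.log (B / A ^ 2) ≤ Real.log (B / A) :=
          Real.log_le_log (by positivity) h1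
        exact h2.trans (log_le_half' _ (div_pos hBpos hApos))
      have heqhalf : A * ((B / A) / 2) = B / 2 := by
        field_simp
      have hchain2 : B * Real.log 2 ≤ B / 2 + A * Real.log (Fintype.card 𝒳)
          + A * Real.log 2 := by
        have h1 := mul_le_mul_of_nonneg_left hlogbd hApos.le
        rw [heqhalf] at h1
        linarith [hchain]
      rw [ge_iff_le, Real.logb, le_div_iff₀ hlog2]
      have hexp : ((1 - 1 / (2 * Real.log 2)) * (B / A) - 1) * Real.log 2 =
          ((B * Real.log 2 - B / 2 - A * Real.log 2) / A) := by
        field_simp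
      rw [hexp, div_le_iff₀ hApos]
      linarith [hchain2]
    · -- card = 1
      have h1 : Fintype.card 𝒳 = 1 := le_antisymm hcard Fintype.card_pos
      obtain ⟨x0, hx0⟩ := Fintype.card_eq_one_iff.mp h1
      have huniv : (univ : Finset 𝒳) = {x0} := by
        ext y; simp [hx0 y]
      have hP1 : P x0 = 1 := by
        rw [← hPsum, huniv, Finset.sum_singleton]
      have hℓ0 : ∀ x, ℓS x = 0 := by
        intro x
        rw [hℓS x, hx0 x, hP1]
        norm_num
      have hA0 : A = 0 := by
        rw [hA]
        apply Finset.sum_eq_zero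
        intro x _
        rw [hℓ0 x]; simp
      rw [hA0, div_zero, h1]
      norm_num
  refine ⟨main, ?_⟩
  rw [le_div_iff₀ hcpos]
  linarith [main]
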